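/- Let g₁ = ℝ ⊕ sl(2,ℝ) with basis T (central), X, Y, Z satisfying [X,Y] = Z, [Z,X] = -Y, [Z,Y] = X, and let ⟨·,·⟩ be the metric ω_ψ(J·,·) with ψ = ax + by + cz (c > 0, c² > a²+b² ) and J as above. Let ξ = (1/D)(cT - bX + aY), D = c² - a² - b², be the metric dual of the Lee form θ = t. Then ξ satisfies ⟨[ξ,U],V⟩ + ⟨U,[ξ,V]⟩ = 0 for all U,V ∈ g₁ if and only if a = b = 0. -/

import Mathlib

/-- `g₁ = ℝ ⊕ sl(2,ℝ)` as a vector space, coordinates `(t, x, y, z)` w.r.t. the basis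
`(T, X, Y, Z)` where `T` is central and `[X,Y] = Z`, `[Z,X] = -Y`, `[Z,Y] = X`. -/
abbrev G1 := ℝ × ℝ × ℝ × ℝ

/-- The bracket of `g₁`: `[X,Y] = Z`, `[Z,X] = -Y`, `[Z,Y] = X`, `T` central. -/
def braG1 (U V : G1) : G1 :=
  (0, U.2.2.2 * V.2.2.1 - U.2.2.1 * V.2.2.2,
      U.2.1 * V.2.2.2 - U.2.2.2 * V.2.1,
      U.2.1 * V.2.2.1 - U.2.2.1 * V.2.1)

/-- The 1-form `ψ = a x + b y + c z`. -/
def psi1 (a b c : ℝ) (U : G1) : ℝ := a * U.2.1 + b * U.2.2.1 + c * U.2.2.2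

/-- The lcK form `ω_ψ = ψ ∧ t + dψ` (with `dx = y∧z`, `dy = z∧x`, `dz = y∧x`). -/
def omega1 (a b c : ℝ) (U V : G1) : ℝ :=
  psi1 a b c U * V.1 - psi1 a b c V * U.1 +
    a * (U.2.2.1 * V.2.2.2 - U.2.2.2 * V.2.2.1) +
    b * (U.2.2.2 * V.2.1 - U.2.1 * V.2.2.2) +
    c * (U.2.2.1 * V.2.1 - U.2.1 * V.2.2.1)

/-- The complex structure `J` with `JX = Y`, `JY = -X`, `JT = Z`, `JZ = -T`. -/
def J1 (U : G1) : G1 := (-U.2.2.2, -U.2.2.1, U.2.1, U.1)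

/-- The metric `⟨U,V⟩ = ω_ψ(JU,V)`. -/
def met1 (a b c : ℝ) (U V : G1) : ℝ := omega1 a b c (J1 U) V

/-- with `c > 0`, `c² > a² + b²`, `D = c² - a² - b²` and
`ξ = (1/D)(cT - bX + aY)` the metric dual of the Lee form `θ = t`, the Lee field `ξ`
is a Killing field (`⟨[ξ,U],V⟩ + ⟨U,[ξ,V]⟩ = 0` for all `U, V`) iff `a = b = 0`. -/
theorem stmt14 (a b c : ℝ) (hc : 0 < c) (h : a ^ 2 + b ^ 2 < c ^ 2) :
    (∀ U V : G1,
        met1 a b c (braG1 ((1 / (c ^ 2 - a ^ 2 - b ^ 2)) • ((c : ℝ), -b, a, (0 : ℝ))) U) V +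
          met1 a b c U (braG1 ((1 / (c ^ 2 - a ^ 2 - b ^ 2)) • ((c : ℝ), -b, a, (0 : ℝ))) V)
          = 0) ↔
      (a = 0 ∧ b = 0) := by
  have hD : c ^ 2 - a ^ 2 - b ^ 2 ≠ 0 := by nlinarith
  constructor
  · intro H
    have h1 := H (0, 1, 0, 0) (0, 1, 0, 0)
    have h2 := H (0, 0, 1, 0) (0, 0, 1, 0)
    simp only [met1, omega1, psi1, J1, braG1, Prod.smul_def, smul_eq_mul] at h1 h2
    field_simp at h1 h2
    exact ⟨mul_self_eq_zero.mp ((mul_eq_zero.mp (show a * a * (c ^ 2 - a ^ 2 - b ^ 2) = 0 by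
        ring_nf at h1 ⊢; nlinarith [h1])).resolve_right hD),
      mul_self_eq_zero.mp ((mul_eq_zero.mp (show b * b * (c ^ 2 - a ^ 2 - b ^ 2) = 0 by
        ring_nf at h2 ⊢; nlinarith [h2])).resolve_right hD)⟩
  · rintro ⟨rfl, rfl⟩ U V
    simp only [met1, omega1, psi1, J1, braG1, Prod.smul_def, smul_eq_mul]
    field_simp
    ring
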